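/- arXiv:1311.3177 — 2 statements merged into one kernel-verified Lean document; each statement's English description precedes it below -/
import Mathlib

section
/- For every bounded bilinear form A : c₀ × c₀ → ℂ, the sum over all i, j of |A(e_i, e_j)|^(4/3) raised to the power 3/4 is at most √2 times the operator norm of A. -/
open scoped ENNReal

noncomputable section

/-- The canonical basis vector `e i` of `c₀`, the space of complex null sequences. -/
def c0e (i : ℕ) : ZeroAtInftyContinuousMap ℕ ℂ :=
  { toContinuousMap := ⟨fun j => if j = i then 1 else 0, continuous_of_discreteTopology⟩
    zero_at_infty' := by
      refine Filter.Tendsto.congr' ?_ tendsto_const_nhds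
      filter_upwards [Filter.mem_cocompact.mpr ⟨{i}, isCompact_singleton, subset_rfl⟩] with j hj
      simp only [Set.mem_compl_iff, Set.mem_singleton_iff] at hj
      simp [hj] }


namespace LW

def ww : Fin 4 → ℂ := ![1, Complex.I, -1, -Complex.I]

lemma norm_ww (k : Fin 4) : ‖ww k‖ = 1 := by
  fin_cases k <;> simp [ww]

lemma normSq4_sq (u S : ℂ) :
    ∑ k : Fin 4, Complex.normSq (ww k * u + S) = 4 * Complex.normSq S + 4 * Complex.normSq u := by
  simp only [Fin.sum_univ_four, ww, Matrix.cons_val_zero, Matrix.cons_val_one, Matrix.head_cons,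
    Matrix.cons_val_two, Matrix.tail_cons, Matrix.cons_val_three, Complex.normSq_apply,
    Complex.add_re, Complex.add_im, Complex.mul_re, Complex.mul_im, Complex.I_re, Complex.I_im,
    Complex.neg_re, Complex.neg_im, Complex.one_re, Complex.one_im]
  ring

lemma normSq4_quad (u S : ℂ) :
    ∑ k : Fin 4, (Complex.normSq (ww k * u + S)) ^ 2 =
      4 * (Complex.normSq S) ^ 2 + 16 * Complex.normSq u * Complex.normSq S
        + 4 * (Complex.normSq u) ^ 2 := by
  simp only [Fin.sum_univ_four, ww, Matrix.cons_val_zero, Matrix.cons_val_one, Matrix.head_cons,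
    Matrix.cons_val_two, Matrix.tail_cons, Matrix.cons_val_three, Complex.normSq_apply,
    Complex.add_re, Complex.add_im, Complex.mul_re, Complex.mul_im, Complex.I_re, Complex.I_im,
    Complex.neg_re, Complex.neg_im, Complex.one_re, Complex.one_im]
  ring

def fcons {n : ℕ} (k : Fin 4) (ε : Fin n → Fin 4) : Fin (n+1) → Fin 4 := Fin.cons k ε

@[simp] lemma fcons_zero {n : ℕ} (k : Fin 4) (ε : Fin n → Fin 4) : fcons k ε 0 = k := rfl

@[simp] lemma fcons_succ {n : ℕ} (k : Fin 4) (ε : Fin n → Fin 4) (j : Fin n) :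
    fcons k ε j.succ = ε j := by simp [fcons]

lemma sum_split (n : ℕ) (F : (Fin (n+1) → Fin 4) → ℝ) :
    ∑ ε : Fin (n+1) → Fin 4, F ε
      = ∑ ε : Fin n → Fin 4, ∑ k : Fin 4, F (fcons k ε) := by
  rw [← Equiv.sum_comp (Fin.consEquiv fun _ => Fin 4) F, Fintype.sum_prod_type_right]
  rfl

lemma S_cons (n : ℕ) (b : Fin (n+1) → ℂ) (k : Fin 4) (ε : Fin n → Fin 4) :
    ∑ j : Fin (n+1), ww (fcons k ε j) * b j
      = ww k * b 0 + ∑ j : Fin n, ww (ε j) * b j.succ := by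
  rw [Fin.sum_univ_succ]
  simp [Fin.cons_zero, Fin.cons_succ]

lemma moment2 (n : ℕ) (b : Fin n → ℂ) :
    ∑ ε : Fin n → Fin 4, Complex.normSq (∑ j, ww (ε j) * b j)
      = 4 ^ n * ∑ j, Complex.normSq (b j) := by
  induction n with
  | zero => simp
  | succ n ih =>
    rw [sum_split]
    have : ∀ ε : Fin n → Fin 4, ∑ k : Fin 4,
        Complex.normSq (∑ j : Fin (n+1), ww (fcons k ε j) * b j)
        = 4 * Complex.normSq (∑ j : Fin n, ww (ε j) * b j.succ) + 4 * Complex.normSq (b 0) := by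
      intro ε
      calc ∑ k : Fin 4, Complex.normSq (∑ j : Fin (n+1), ww (fcons k ε j) * b j)
          = ∑ k : Fin 4, Complex.normSq (ww k * b 0 + ∑ j : Fin n, ww (ε j) * b j.succ) := by
            refine Finset.sum_congr rfl fun k _ => by rw [S_cons]
        _ = _ := normSq4_sq _ _
    rw [Finset.sum_congr rfl fun ε _ => this ε, Finset.sum_add_distrib, ← Finset.mul_sum,
      ih (fun j => b j.succ), Finset.sum_const, Fin.sum_univ_succ]
    simp [Fintype.card_fun, mul_add]
    ring

lemma moment4 (n : ℕ) (b : Fin n → ℂ) :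
    ∑ ε : Fin n → Fin 4, (Complex.normSq (∑ j, ww (ε j) * b j)) ^ 2
      ≤ 2 * 4 ^ n * (∑ j, Complex.normSq (b j)) ^ 2 := by
  induction n with
  | zero => simp
  | succ n ih =>
    rw [sum_split]
    have key : ∀ ε : Fin n → Fin 4, ∑ k : Fin 4,
        (Complex.normSq (∑ j : Fin (n+1), ww (fcons k ε j) * b j)) ^ 2
        = 4 * (Complex.normSq (∑ j : Fin n, ww (ε j) * b j.succ)) ^ 2
          + 16 * Complex.normSq (b 0) * Complex.normSq (∑ j : Fin n, ww (ε j) * b j.succ)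
          + 4 * (Complex.normSq (b 0)) ^ 2 := by
      intro ε
      calc ∑ k : Fin 4, (Complex.normSq (∑ j : Fin (n+1), ww (fcons k ε j) * b j)) ^ 2
          = ∑ k : Fin 4, (Complex.normSq (ww k * b 0 + ∑ j : Fin n, ww (ε j) * b j.succ)) ^ 2 := by
            refine Finset.sum_congr rfl fun k _ => by rw [S_cons]
        _ = _ := normSq4_quad _ _
    rw [Finset.sum_congr rfl fun ε _ => key ε]
    rw [Finset.sum_add_distrib, Finset.sum_add_distrib, ← Finset.mul_sum, ← Finset.mul_sum,
      moment2 n (fun j => b j.succ), Finset.sum_const]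
    have hP : (0:ℝ) ≤ ∑ j : Fin n, Complex.normSq (b j.succ) :=
      Finset.sum_nonneg fun j _ => Complex.normSq_nonneg _
    have hu : (0:ℝ) ≤ Complex.normSq (b 0) := Complex.normSq_nonneg _
    have hcard : (Finset.univ : Finset (Fin n → Fin 4)).card = 4 ^ n := by
      simp [Fintype.card_fun]
    rw [hcard, Fin.sum_univ_succ, nsmul_eq_mul]
    push_cast
    have h4 : (0:ℝ) < 4 ^ n := by positivity
    have hpow : (4:ℝ) ^ (n+1) = 4 * 4 ^ n := by ring
    rw [hpow]
    nlinarith [ih (fun j => b j.succ), sq_nonneg (Complex.normSq (b 0)),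
      mul_le_mul_of_nonneg_left (ih (fun j => b j.succ)) (by norm_num : (0:ℝ) ≤ 4),
      mul_nonneg h4.le (sq_nonneg (Complex.normSq (b 0))),
      mul_nonneg (mul_nonneg h4.le hu) hP]

lemma cube_ineq {ι : Type*} [Fintype ι] (f : ι → ℝ) (hf : ∀ i, 0 ≤ f i) :
    (∑ i, f i ^ 2) ^ 3 ≤ (∑ i, f i) ^ 2 * ∑ i, f i ^ 4 := by
  have cs1 : (∑ i, f i ^ 2) ^ 2 ≤ (∑ i, f i) * ∑ i, f i ^ 3 := by
    have h := Finset.sum_mul_sq_le_sq_mul_sq Finset.univ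
      (fun i => Real.sqrt (f i)) (fun i => f i * Real.sqrt (f i))
    have e1 : ∀ i, Real.sqrt (f i) * (f i * Real.sqrt (f i)) = f i ^ 2 := fun i => by
      rw [show Real.sqrt (f i) * (f i * Real.sqrt (f i))
            = Real.sqrt (f i) * Real.sqrt (f i) * f i by ring, Real.mul_self_sqrt (hf i), sq]
    have e2 : ∀ i, Real.sqrt (f i) ^ 2 = f i := fun i => Real.sq_sqrt (hf i)
    have e3 : ∀ i, (f i * Real.sqrt (f i)) ^ 2 = f i ^ 3 := fun i => by
      rw [mul_pow, Real.sq_sqrt (hf i)]; ring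
    simpa only [Finset.sum_congr rfl fun i _ => e1 i, Finset.sum_congr rfl fun i _ => e2 i,
      Finset.sum_congr rfl fun i _ => e3 i] using h
  have cs2 : (∑ i, f i ^ 3) ^ 2 ≤ (∑ i, f i ^ 2) * ∑ i, f i ^ 4 := by
    have h := Finset.sum_mul_sq_le_sq_mul_sq Finset.univ (fun i => f i) (fun i => f i ^ 2)
    have e1 : ∀ i, f i * f i ^ 2 = f i ^ 3 := fun i => by ring
    have e3 : ∀ i, (f i ^ 2) ^ 2 = f i ^ 4 := fun i => by ring
    simpa only [Finset.sum_congr rfl fun i _ => e1 i, Finset.sum_congr rfl fun i _ => e3 i] using h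
  have h2 : (0:ℝ) ≤ ∑ i, f i ^ 2 := Finset.sum_nonneg fun i _ => sq_nonneg _
  have h1 : (0:ℝ) ≤ ∑ i, f i := Finset.sum_nonneg fun i _ => hf i
  have h3 : (0:ℝ) ≤ ∑ i, f i ^ 3 := Finset.sum_nonneg fun i _ => pow_nonneg (hf i) 3
  rcases eq_or_lt_of_le h2 with h0 | hpos
  · rw [← h0]
    have : ((0:ℝ)) ^ 3 = 0 := by norm_num
    rw [this]
    positivity
  · have hv4 : (∑ i, f i ^ 2) ^ 4 ≤ ((∑ i, f i) ^ 2 * ∑ i, f i ^ 4) * (∑ i, f i ^ 2) := by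
      calc (∑ i, f i ^ 2) ^ 4 = ((∑ i, f i ^ 2) ^ 2) ^ 2 := by ring
        _ ≤ ((∑ i, f i) * ∑ i, f i ^ 3) ^ 2 := by
            apply pow_le_pow_left₀ (sq_nonneg _) cs1
        _ = (∑ i, f i) ^ 2 * (∑ i, f i ^ 3) ^ 2 := by ring
        _ ≤ (∑ i, f i) ^ 2 * ((∑ i, f i ^ 2) * ∑ i, f i ^ 4) :=
            mul_le_mul_of_nonneg_left cs2 (sq_nonneg _)
        _ = ((∑ i, f i) ^ 2 * ∑ i, f i ^ 4) * (∑ i, f i ^ 2) := by ring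
    have h6 : (∑ i, f i ^ 2) ^ 3 * (∑ i, f i ^ 2)
        ≤ ((∑ i, f i) ^ 2 * ∑ i, f i ^ 4) * (∑ i, f i ^ 2) := by
      calc (∑ i, f i ^ 2) ^ 3 * (∑ i, f i ^ 2) = (∑ i, f i ^ 2) ^ 4 := by ring
        _ ≤ _ := hv4
    exact le_of_mul_le_mul_right h6 hpos

lemma khintchine (n : ℕ) (b : Fin n → ℂ) :
    4 ^ n * Real.sqrt (∑ j, ‖b j‖ ^ 2) ≤
      Real.sqrt 2 * ∑ ε : Fin n → Fin 4, ‖∑ j, ww (ε j) * b j‖ := by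
  have hnormSq : ∀ z : ℂ, Complex.normSq z = ‖z‖ ^ 2 := fun z => by
    rw [Complex.normSq_eq_norm_sq]
  set P : ℝ := ∑ j, ‖b j‖ ^ 2 with hP
  set T : ℝ := ∑ ε : Fin n → Fin 4, ‖∑ j, ww (ε j) * b j‖ with hT
  have hPn : 0 ≤ P := Finset.sum_nonneg fun j _ => sq_nonneg _
  have hTn : 0 ≤ T := Finset.sum_nonneg fun ε _ => norm_nonneg _
  have m2 : ∑ ε : Fin n → Fin 4, ‖∑ j, ww (ε j) * b j‖ ^ 2 = 4 ^ n * P := by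
    have := moment2 n b
    simp only [hnormSq] at this
    exact this
  have m4 : ∑ ε : Fin n → Fin 4, ‖∑ j, ww (ε j) * b j‖ ^ 4 ≤ 2 * 4 ^ n * P ^ 2 := by
    have := moment4 n b
    simp only [hnormSq] at this
    calc ∑ ε : Fin n → Fin 4, ‖∑ j, ww (ε j) * b j‖ ^ 4
        = ∑ ε : Fin n → Fin 4, (‖∑ j, ww (ε j) * b j‖ ^ 2) ^ 2 := by
          refine Finset.sum_congr rfl fun ε _ => by ring
      _ ≤ _ := this
  have cube := cube_ineq (fun ε : Fin n → Fin 4 => ‖∑ j, ww (ε j) * b j‖)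
    (fun ε => norm_nonneg _)
  rw [m2] at cube
  have hq : (0:ℝ) < 4 ^ n := by positivity
  have key : ((4:ℝ)^n) ^ 2 * P ≤ 2 * T ^ 2 := by
    rcases eq_or_lt_of_le hPn with h0 | hPpos
    · rw [← h0, mul_zero]; positivity
    · have step : ((4:ℝ)^n * P)^3 ≤ T ^ 2 * (2 * 4 ^ n * P ^ 2) :=
        le_trans cube (by gcongr <;> first | exact m4 | positivity)
      have h5 : ((4:ℝ)^n) ^ 2 * P * ((4:ℝ)^n * P ^ 2) ≤ 2 * T ^ 2 * ((4:ℝ)^n * P ^ 2) := by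
        calc ((4:ℝ)^n) ^ 2 * P * ((4:ℝ)^n * P ^ 2) = ((4:ℝ)^n * P)^3 := by ring
          _ ≤ T ^ 2 * (2 * 4 ^ n * P ^ 2) := step
          _ = 2 * T ^ 2 * ((4:ℝ)^n * P ^ 2) := by ring
      exact le_of_mul_le_mul_right h5 (by positivity)
  calc (4:ℝ) ^ n * Real.sqrt P = Real.sqrt (((4:ℝ)^n) ^ 2 * P) := by
        rw [Real.sqrt_mul (by positivity), Real.sqrt_sq hq.le]
    _ ≤ Real.sqrt (2 * T ^ 2) := Real.sqrt_le_sqrt key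
    _ = Real.sqrt 2 * T := by
        rw [Real.sqrt_mul (by norm_num : (0:ℝ) ≤ 2) (T ^ 2), Real.sqrt_sq hTn]

lemma norm_absorb {n : ℕ} (T : Fin n → ℂ) :
    ∃ c : Fin n → ℂ, (∀ i, ‖c i‖ ≤ 1) ∧ ∑ i, c i * T i = ((∑ i, ‖T i‖ : ℝ) : ℂ) := by
  refine ⟨fun i => (starRingEnd ℂ) (T i) / (‖T i‖ : ℂ), fun i => ?_, ?_⟩
  · rcases eq_or_ne (T i) 0 with h | h
    · simp [h]
    · rw [norm_div]
      rw [RCLike.norm_conj]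
      rw [Complex.norm_real, norm_norm]
      rw [div_self (by simpa using h)]
  · push_cast
    refine Finset.sum_congr rfl fun i _ => ?_
    rcases eq_or_ne (T i) 0 with h | h
    · simp [h]
    · rw [div_mul_eq_mul_div, Complex.conj_mul']
      rw [show ((‖T i‖ : ℝ) : ℂ) ^ 2 = (‖T i‖ : ℂ) * ‖T i‖ by push_cast; ring]
      rw [mul_div_assoc, div_self (by simpa using h), mul_one]

lemma row_bound {n : ℕ} (M : ℝ) (a : Fin n → Fin n → ℂ)
    (hb : ∀ g h : Fin n → ℂ, (∀ i, ‖g i‖ ≤ 1) → (∀ j, ‖h j‖ ≤ 1) →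
      ‖∑ i, ∑ j, g i * h j * a i j‖ ≤ M) :
    ∑ i, Real.sqrt (∑ j, ‖a i j‖ ^ 2) ≤ Real.sqrt 2 * M := by
  have hb' : ∀ h : Fin n → ℂ, (∀ j, ‖h j‖ ≤ 1) →
      ∑ i, ‖∑ j, h j * a i j‖ ≤ M := by
    intro h hh
    obtain ⟨c, hc1, hc2⟩ := norm_absorb (fun i => ∑ j, h j * a i j)
    have e : ∑ i, ∑ j, c i * h j * a i j = ∑ i, c i * ∑ j, h j * a i j := by
      refine Finset.sum_congr rfl fun i _ => ?_
      rw [Finset.mul_sum]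
      exact Finset.sum_congr rfl fun j _ => by ring
    have := hb c h hc1 hh
    rw [e, hc2] at this
    rw [Complex.norm_real, Real.norm_eq_abs, abs_of_nonneg
      (Finset.sum_nonneg fun i _ => norm_nonneg _)] at this
    exact this
  have h4 : (0:ℝ) < 4 ^ n := by positivity
  rw [← mul_le_mul_iff_right₀ h4]
  calc (4:ℝ) ^ n * ∑ i, Real.sqrt (∑ j, ‖a i j‖ ^ 2)
      = ∑ i, (4:ℝ) ^ n * Real.sqrt (∑ j, ‖a i j‖ ^ 2) := Finset.mul_sum _ _ _
    _ ≤ ∑ i, Real.sqrt 2 * ∑ ε : Fin n → Fin 4, ‖∑ j, ww (ε j) * a i j‖ :=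
        Finset.sum_le_sum fun i _ => khintchine n (a i)
    _ = Real.sqrt 2 * ∑ ε : Fin n → Fin 4, ∑ i, ‖∑ j, ww (ε j) * a i j‖ := by
        rw [← Finset.mul_sum, Finset.sum_comm]
    _ ≤ Real.sqrt 2 * ∑ ε : Fin n → Fin 4, M := by
        refine mul_le_mul_of_nonneg_left (Finset.sum_le_sum fun ε _ => ?_) (Real.sqrt_nonneg 2)
        exact hb' (fun j => ww (ε j)) (fun j => le_of_eq (norm_ww (ε j)))
    _ = (4:ℝ) ^ n * (Real.sqrt 2 * M) := by
        rw [Finset.sum_const]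
        simp [Fintype.card_fun]
        ring

lemma holder_a {n : ℕ} (t : Fin n → ℝ) (ht : ∀ j, 0 ≤ t j) :
    ∑ j, t j ^ ((4:ℝ)/3) ≤ (∑ j, t j ^ 2) ^ ((1:ℝ)/3) * (∑ j, t j) ^ ((2:ℝ)/3) := by
  have hpq : Real.HolderConjugate 3 (3/2) := Real.holderConjugate_iff.mpr ⟨by norm_num, by norm_num⟩
  have h := Real.inner_le_Lp_mul_Lq_of_nonneg (s := Finset.univ) hpq
    (f := fun j => t j ^ ((2:ℝ)/3)) (g := fun j => t j ^ ((2:ℝ)/3))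
    (fun j _ => Real.rpow_nonneg (ht j) _) (fun j _ => Real.rpow_nonneg (ht j) _)
  have e1 : ∀ j, t j ^ ((2:ℝ)/3) * t j ^ ((2:ℝ)/3) = t j ^ ((4:ℝ)/3) := fun j => by
    rw [← Real.rpow_add' (ht j) (by norm_num)]; norm_num
  have e2 : ∀ j, (t j ^ ((2:ℝ)/3)) ^ (3:ℝ) = t j ^ 2 := fun j => by
    rw [← Real.rpow_natCast (t j) 2, ← Real.rpow_mul (ht j)]; norm_num
  have e3 : ∀ j, (t j ^ ((2:ℝ)/3)) ^ ((3:ℝ)/2) = t j := fun j => by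
    rw [← Real.rpow_mul (ht j)]; norm_num
  calc ∑ j, t j ^ ((4:ℝ)/3) = ∑ j, t j ^ ((2:ℝ)/3) * t j ^ ((2:ℝ)/3) :=
        (Finset.sum_congr rfl fun j _ => (e1 j).symm)
    _ ≤ (∑ j, (t j ^ ((2:ℝ)/3)) ^ (3:ℝ)) ^ ((1:ℝ)/3)
        * (∑ j, (t j ^ ((2:ℝ)/3)) ^ ((3:ℝ)/2)) ^ (1/((3:ℝ)/2)) := h
    _ = (∑ j, t j ^ 2) ^ ((1:ℝ)/3) * (∑ j, t j) ^ ((2:ℝ)/3) := by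
        rw [Finset.sum_congr rfl fun j _ => e2 j, Finset.sum_congr rfl fun j _ => e3 j]
        norm_num

lemma holder_b {n : ℕ} (r B : Fin n → ℝ) (hr : ∀ i, 0 ≤ r i) (hB : ∀ i, 0 ≤ B i) :
    ∑ i, r i ^ ((2:ℝ)/3) * B i ^ ((2:ℝ)/3) ≤
      (∑ i, r i) ^ ((2:ℝ)/3) * (∑ i, B i ^ 2) ^ ((1:ℝ)/3) := by
  have hpq : Real.HolderConjugate (3/2) 3 := Real.holderConjugate_iff.mpr ⟨by norm_num, by norm_num⟩
  have h := Real.inner_le_Lp_mul_Lq_of_nonneg (s := Finset.univ) hpq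
    (f := fun i => r i ^ ((2:ℝ)/3)) (g := fun i => B i ^ ((2:ℝ)/3))
    (fun i _ => Real.rpow_nonneg (hr i) _) (fun i _ => Real.rpow_nonneg (hB i) _)
  have e2 : ∀ i, (r i ^ ((2:ℝ)/3)) ^ ((3:ℝ)/2) = r i := fun i => by
    rw [← Real.rpow_mul (hr i)]; norm_num
  have e3 : ∀ i, (B i ^ ((2:ℝ)/3)) ^ (3:ℝ) = B i ^ 2 := fun i => by
    rw [← Real.rpow_natCast (B i) 2, ← Real.rpow_mul (hB i)]; norm_num
  calc ∑ i, r i ^ ((2:ℝ)/3) * B i ^ ((2:ℝ)/3)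
      ≤ (∑ i, (r i ^ ((2:ℝ)/3)) ^ ((3:ℝ)/2)) ^ (1/((3:ℝ)/2))
        * (∑ i, (B i ^ ((2:ℝ)/3)) ^ (3:ℝ)) ^ ((1:ℝ)/3) := h
    _ = _ := by
        rw [Finset.sum_congr rfl fun i _ => e2 i, Finset.sum_congr rfl fun i _ => e3 i]
        norm_num

lemma minkowski {n : ℕ} (t : Fin n → Fin n → ℝ) (ht : ∀ i j, 0 ≤ t i j) :
    ∑ i, (∑ j, t i j) ^ 2 ≤ (∑ j, Real.sqrt (∑ i, t i j ^ 2)) ^ 2 := by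
  have hD : (0:ℝ) ≤ ∑ i, (∑ j, t i j) ^ 2 := Finset.sum_nonneg fun i _ => sq_nonneg _
  have hCn : (0:ℝ) ≤ ∑ j, Real.sqrt (∑ i, t i j ^ 2) :=
    Finset.sum_nonneg fun j _ => Real.sqrt_nonneg _
  have key : ∑ i, (∑ j, t i j) ^ 2 ≤
      Real.sqrt (∑ i, (∑ j, t i j) ^ 2) * ∑ j, Real.sqrt (∑ i, t i j ^ 2) := by
    calc ∑ i, (∑ j, t i j) ^ 2 = ∑ i, ∑ j, (∑ k, t i k) * t i j := by
          refine Finset.sum_congr rfl fun i _ => ?_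
          rw [← Finset.mul_sum, sq]
      _ = ∑ j, ∑ i, (∑ k, t i k) * t i j := Finset.sum_comm
      _ ≤ ∑ j, Real.sqrt (∑ i, (∑ k, t i k) ^ 2) * Real.sqrt (∑ i, t i j ^ 2) :=
          Finset.sum_le_sum fun j _ => Real.sum_mul_le_sqrt_mul_sqrt Finset.univ _ _
      _ = Real.sqrt (∑ i, (∑ j, t i j) ^ 2) * ∑ j, Real.sqrt (∑ i, t i j ^ 2) := by
          rw [Finset.mul_sum]
  rcases eq_or_lt_of_le hD with h0 | hpos
  · rw [← h0]; positivity
  · have hs : 0 < Real.sqrt (∑ i, (∑ j, t i j) ^ 2) := Real.sqrt_pos.mpr hpos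
    have h1 : Real.sqrt (∑ i, (∑ j, t i j) ^ 2) ≤ ∑ j, Real.sqrt (∑ i, t i j ^ 2) := by
      have h2 : Real.sqrt (∑ i, (∑ j, t i j) ^ 2) * Real.sqrt (∑ i, (∑ j, t i j) ^ 2)
          ≤ Real.sqrt (∑ i, (∑ j, t i j) ^ 2) * ∑ j, Real.sqrt (∑ i, t i j ^ 2) := by
        rw [Real.mul_self_sqrt hD]; exact key
      exact le_of_mul_le_mul_left h2 hs
    calc ∑ i, (∑ j, t i j) ^ 2 = Real.sqrt (∑ i, (∑ j, t i j) ^ 2) ^ 2 := (Real.sq_sqrt hD).symm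
      _ ≤ (∑ j, Real.sqrt (∑ i, t i j ^ 2)) ^ 2 := by
          apply pow_le_pow_left₀ (Real.sqrt_nonneg _) h1

lemma interp {n : ℕ} (t : Fin n → Fin n → ℝ) (ht : ∀ i j, 0 ≤ t i j) :
    ∑ i, ∑ j, t i j ^ ((4:ℝ)/3) ≤
      (∑ i, Real.sqrt (∑ j, t i j ^ 2)) ^ ((2:ℝ)/3)
        * (∑ j, Real.sqrt (∑ i, t i j ^ 2)) ^ ((2:ℝ)/3) := by
  have hsq : ∀ i, (0:ℝ) ≤ ∑ j, t i j ^ 2 := fun i => Finset.sum_nonneg fun j _ => sq_nonneg _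
  have hrB : ∀ i, (∑ j, t i j ^ 2) ^ ((1:ℝ)/3)
      = (Real.sqrt (∑ j, t i j ^ 2)) ^ ((2:ℝ)/3) := fun i => by
    rw [Real.sqrt_eq_rpow, ← Real.rpow_mul (hsq i)]; norm_num
  have hC : (0:ℝ) ≤ ∑ j, Real.sqrt (∑ i, t i j ^ 2) :=
    Finset.sum_nonneg fun j _ => Real.sqrt_nonneg _
  have hR : (0:ℝ) ≤ ∑ i, Real.sqrt (∑ j, t i j ^ 2) :=
    Finset.sum_nonneg fun i _ => Real.sqrt_nonneg _
  have hBsum : (0:ℝ) ≤ ∑ i, (∑ j, t i j) ^ 2 := Finset.sum_nonneg fun i _ => sq_nonneg _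
  calc ∑ i, ∑ j, t i j ^ ((4:ℝ)/3)
      ≤ ∑ i, (Real.sqrt (∑ j, t i j ^ 2)) ^ ((2:ℝ)/3) * (∑ j, t i j) ^ ((2:ℝ)/3) := by
        refine Finset.sum_le_sum fun i _ => ?_
        rw [← hrB i]
        exact holder_a (t i) (ht i)
    _ ≤ (∑ i, Real.sqrt (∑ j, t i j ^ 2)) ^ ((2:ℝ)/3)
          * (∑ i, (∑ j, t i j) ^ 2) ^ ((1:ℝ)/3) :=
        holder_b _ _ (fun i => Real.sqrt_nonneg _)
          (fun i => Finset.sum_nonneg fun j _ => ht i j)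
    _ ≤ (∑ i, Real.sqrt (∑ j, t i j ^ 2)) ^ ((2:ℝ)/3)
          * (∑ j, Real.sqrt (∑ i, t i j ^ 2)) ^ ((2:ℝ)/3) := by
        refine mul_le_mul_of_nonneg_left ?_ (Real.rpow_nonneg hR _)
        calc (∑ i, (∑ j, t i j) ^ 2) ^ ((1:ℝ)/3)
            ≤ ((∑ j, Real.sqrt (∑ i, t i j ^ 2)) ^ 2) ^ ((1:ℝ)/3) :=
              Real.rpow_le_rpow hBsum (minkowski t ht) (by norm_num)
          _ = (∑ j, Real.sqrt (∑ i, t i j ^ 2)) ^ ((2:ℝ)/3) := by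
              rw [← Real.rpow_natCast (∑ j, Real.sqrt (∑ i, t i j ^ 2)) 2,
                ← Real.rpow_mul hC]
              norm_num

lemma main_finite {n : ℕ} (M : ℝ) (hM : 0 ≤ M) (a : Fin n → Fin n → ℂ)
    (hb : ∀ g h : Fin n → ℂ, (∀ i, ‖g i‖ ≤ 1) → (∀ j, ‖h j‖ ≤ 1) →
      ‖∑ i, ∑ j, g i * h j * a i j‖ ≤ M) :
    ∑ i, ∑ j, ‖a i j‖ ^ ((4:ℝ)/3) ≤ (Real.sqrt 2 * M) ^ ((4:ℝ)/3) := by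
  have hR := row_bound M a hb
  have hbT : ∀ g h : Fin n → ℂ, (∀ i, ‖g i‖ ≤ 1) → (∀ j, ‖h j‖ ≤ 1) →
      ‖∑ i, ∑ j, g i * h j * a j i‖ ≤ M := by
    intro g h hg hh
    have e : ∑ i, ∑ j, g i * h j * a j i = ∑ i, ∑ j, h i * g j * a i j := by
      rw [Finset.sum_comm]
      exact Finset.sum_congr rfl fun i _ => Finset.sum_congr rfl fun j _ => by ring
    rw [e]
    exact hb h g hh hg
  have hC := row_bound M (fun i j => a j i) hbT
  have hRn : (0:ℝ) ≤ ∑ i, Real.sqrt (∑ j, ‖a i j‖ ^ 2) :=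
    Finset.sum_nonneg fun i _ => Real.sqrt_nonneg _
  have hCn : (0:ℝ) ≤ ∑ j, Real.sqrt (∑ i, ‖a i j‖ ^ 2) :=
    Finset.sum_nonneg fun j _ => Real.sqrt_nonneg _
  have hM2 : (0:ℝ) ≤ Real.sqrt 2 * M := mul_nonneg (Real.sqrt_nonneg 2) hM
  calc ∑ i, ∑ j, ‖a i j‖ ^ ((4:ℝ)/3)
      ≤ (∑ i, Real.sqrt (∑ j, ‖a i j‖ ^ 2)) ^ ((2:ℝ)/3)
        * (∑ j, Real.sqrt (∑ i, ‖a i j‖ ^ 2)) ^ ((2:ℝ)/3) :=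
        interp (fun i j => ‖a i j‖) (fun i j => norm_nonneg _)
    _ ≤ (Real.sqrt 2 * M) ^ ((2:ℝ)/3) * (Real.sqrt 2 * M) ^ ((2:ℝ)/3) :=
        mul_le_mul (Real.rpow_le_rpow hRn hR (by norm_num))
          (Real.rpow_le_rpow hCn hC (by norm_num))
          (Real.rpow_nonneg hCn _) (Real.rpow_nonneg hM2 _)
    _ = (Real.sqrt 2 * M) ^ ((4:ℝ)/3) := by
        rw [← Real.rpow_add' hM2 (by norm_num)]
        norm_num

lemma c0e_apply (i k : ℕ) : c0e i k = if k = i then 1 else 0 := rfl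

lemma c0_coe_sum {ι : Type*} (s : Finset ι) (f : ι → ZeroAtInftyContinuousMap ℕ ℂ) (k : ℕ) :
    (∑ i ∈ s, f i) k = ∑ i ∈ s, f i k := by
  classical
  induction s using Finset.cons_induction with
  | empty => simp [ZeroAtInftyContinuousMap.coe_zero]
  | cons i s his ih =>
    rw [Finset.sum_cons, Finset.sum_cons, ZeroAtInftyContinuousMap.coe_add, Pi.add_apply, ih]

lemma norm_comb_le {n : ℕ} (g : Fin n → ℂ) (hg : ∀ i, ‖g i‖ ≤ 1) :
    ‖∑ i : Fin n, g i • c0e (i : ℕ)‖ ≤ 1 := by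
  rw [← ZeroAtInftyContinuousMap.norm_toBCF_eq_norm]
  rw [BoundedContinuousFunction.norm_le zero_le_one]
  intro k
  have hk : (∑ i : Fin n, g i • c0e (i : ℕ)).toBCF k = ∑ i : Fin n, g i * (c0e (i:ℕ) k) := by
    show (∑ i : Fin n, g i • c0e (i : ℕ)) k = _
    rw [c0_coe_sum]
    refine Finset.sum_congr rfl fun i _ => ?_
    rw [ZeroAtInftyContinuousMap.coe_smul]
    rfl
  rw [hk]
  by_cases hkn : k < n
  · rw [Finset.sum_eq_single (⟨k, hkn⟩ : Fin n)]
    · rw [c0e_apply]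
      simp only [if_pos rfl]
      simpa using hg ⟨k, hkn⟩
    · intro i _ hi
      rw [c0e_apply, if_neg, mul_zero]
      intro hki
      exact hi (by exact Fin.ext hki.symm)
    · intro h; exact absurd (Finset.mem_univ _) h
  · rw [Finset.sum_eq_zero]
    · simp
    · intro i _
      rw [c0e_apply, if_neg, mul_zero]
      intro hki
      exact hkn (hki ▸ i.isLt)

lemma update0 (x y z : ZeroAtInftyContinuousMap ℕ ℂ) :
    Function.update ![x, y] 0 z = ![z, y] := by
  funext m
  fin_cases m <;> simp [Function.update]

lemma update1 (x y z : ZeroAtInftyContinuousMap ℕ ℂ) :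
    Function.update ![x, y] 1 z = ![x, z] := by
  funext m
  fin_cases m <;> simp [Function.update]

lemma cmap_update_sum
    (A : ContinuousMultilinearMap ℂ (fun _ : Fin 2 => ZeroAtInftyContinuousMap ℕ ℂ) ℂ)
    {α : Type*} (t : Finset α) (i : Fin 2) (gg : α → ZeroAtInftyContinuousMap ℕ ℂ)
    (m : Fin 2 → ZeroAtInftyContinuousMap ℕ ℂ) :
    A (Function.update m i (∑ a ∈ t, gg a)) = ∑ a ∈ t, A (Function.update m i (gg a)) :=
  A.toMultilinearMap.map_update_sum t i gg m

lemma expand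
    (A : ContinuousMultilinearMap ℂ (fun _ : Fin 2 => ZeroAtInftyContinuousMap ℕ ℂ) ℂ)
    {n : ℕ} (g h : Fin n → ℂ) :
    A ![∑ i : Fin n, g i • c0e (i:ℕ), ∑ j : Fin n, h j • c0e (j:ℕ)]
      = ∑ i : Fin n, ∑ j : Fin n, g i * h j * A ![c0e (i:ℕ), c0e (j:ℕ)] := by
  set x : ZeroAtInftyContinuousMap ℕ ℂ := ∑ i : Fin n, g i • c0e (i:ℕ) with hx
  set y : ZeroAtInftyContinuousMap ℕ ℂ := ∑ j : Fin n, h j • c0e (j:ℕ) with hy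
  have expand1 : ∀ z : ZeroAtInftyContinuousMap ℕ ℂ,
      A ![z, y] = ∑ j : Fin n, h j * A ![z, c0e (j:ℕ)] := by
    intro z
    have e1 : A ![z, y] = A (Function.update ![z, y] 1 y) := by rw [update1]
    rw [e1, hy, cmap_update_sum]
    refine Finset.sum_congr rfl fun j _ => ?_
    rw [A.map_update_smul, update1, smul_eq_mul]
  have e0 : A ![x, y] = A (Function.update ![x, y] 0 x) := by rw [update0]
  rw [e0, hx, cmap_update_sum]
  calc ∑ i : Fin n, A (Function.update ![x, y] 0 (g i • c0e (i:ℕ)))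
      = ∑ i : Fin n, g i * A ![c0e (i:ℕ), y] := by
        refine Finset.sum_congr rfl fun i _ => ?_
        rw [A.map_update_smul, update0, smul_eq_mul]
    _ = ∑ i : Fin n, ∑ j : Fin n, g i * h j * A ![c0e (i:ℕ), c0e (j:ℕ)] := by
        refine Finset.sum_congr rfl fun i _ => ?_
        rw [expand1 (c0e (i:ℕ)), Finset.mul_sum]
        exact Finset.sum_congr rfl fun j _ => by ring

lemma hboundA
    (A : ContinuousMultilinearMap ℂ (fun _ : Fin 2 => ZeroAtInftyContinuousMap ℕ ℂ) ℂ)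
    {n : ℕ} (g h : Fin n → ℂ) (hg : ∀ i, ‖g i‖ ≤ 1) (hh : ∀ j, ‖h j‖ ≤ 1) :
    ‖∑ i : Fin n, ∑ j : Fin n, g i * h j * A ![c0e (i:ℕ), c0e (j:ℕ)]‖ ≤ ‖A‖ := by
  rw [← expand A g h]
  set x : ZeroAtInftyContinuousMap ℕ ℂ := ∑ i : Fin n, g i • c0e (i:ℕ) with hx
  set y : ZeroAtInftyContinuousMap ℕ ℂ := ∑ j : Fin n, h j • c0e (j:ℕ) with hy
  have hxl : ‖x‖ ≤ 1 := norm_comb_le g hg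
  have hyl : ‖y‖ ≤ 1 := norm_comb_le h hh
  calc ‖A ![x, y]‖ ≤ ‖A‖ * ∏ i : Fin 2, ‖(![x, y] : Fin 2 → _) i‖ := A.le_opNorm _
    _ = ‖A‖ * (‖x‖ * ‖y‖) := by rw [Fin.prod_univ_two]; simp
    _ ≤ ‖A‖ * (1 * 1) := by
        refine mul_le_mul_of_nonneg_left ?_ (norm_nonneg A)
        exact mul_le_mul hxl hyl (norm_nonneg _) zero_le_one
    _ = ‖A‖ := by ring

end LW

/-- **Littlewood's 4/3 inequality.** For every bounded bilinear form `A : c₀ × c₀ → ℂ`,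
`(∑_{i,j} |A(e_i,e_j)|^{4/3})^{3/4} ≤ √2 ‖A‖`. -/
theorem littlewood_four_thirds
    (A : ContinuousMultilinearMap ℂ (fun _ : Fin 2 => ZeroAtInftyContinuousMap ℕ ℂ) ℂ) :
    (∑' i : ℕ, ∑' j : ℕ, ‖A ![c0e i, c0e j]‖ ^ ((4 : ℝ) / 3)) ^ ((3 : ℝ) / 4) ≤
      Real.sqrt 2 * ‖A‖ := by
  classical
  set F : ℕ × ℕ → ℝ := fun p => ‖A ![c0e p.1, c0e p.2]‖ ^ ((4 : ℝ) / 3) with hF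
  have hFnn : ∀ p, 0 ≤ F p := fun p => Real.rpow_nonneg (norm_nonneg _) _
  have hM2 : (0:ℝ) ≤ Real.sqrt 2 * ‖A‖ := mul_nonneg (Real.sqrt_nonneg 2) (norm_nonneg A)
  have hC : ∀ s : Finset (ℕ × ℕ), ∑ p ∈ s, F p ≤ (Real.sqrt 2 * ‖A‖) ^ ((4:ℝ)/3) := by
    intro s
    set n : ℕ := (s.sup fun p => max p.1 p.2) + 1 with hn
    have hsub : s ⊆ Finset.range n ×ˢ Finset.range n := by
      intro p hp
      rw [Finset.mem_product, Finset.mem_range, Finset.mem_range]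
      have hs : max p.1 p.2 ≤ s.sup fun q => max q.1 q.2 := Finset.le_sup (f := fun q => max q.1 q.2) hp
      constructor
      · exact lt_of_le_of_lt (le_trans (le_max_left _ _) hs) (Nat.lt_succ_self _)
      · exact lt_of_le_of_lt (le_trans (le_max_right _ _) hs) (Nat.lt_succ_self _)
    calc ∑ p ∈ s, F p ≤ ∑ p ∈ Finset.range n ×ˢ Finset.range n, F p :=
          Finset.sum_le_sum_of_subset_of_nonneg hsub fun p _ _ => hFnn p
      _ = ∑ i ∈ Finset.range n, ∑ j ∈ Finset.range n, ‖A ![c0e i, c0e j]‖ ^ ((4:ℝ)/3) := by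
          rw [Finset.sum_product]
      _ = ∑ i : Fin n, ∑ j : Fin n, ‖A ![c0e (i:ℕ), c0e (j:ℕ)]‖ ^ ((4:ℝ)/3) := by
          rw [← Fin.sum_univ_eq_sum_range (fun i =>
            ∑ j ∈ Finset.range n, ‖A ![c0e i, c0e j]‖ ^ ((4:ℝ)/3))]
          exact Finset.sum_congr rfl fun i _ =>
            (Fin.sum_univ_eq_sum_range (fun j => ‖A ![c0e (i:ℕ), c0e j]‖ ^ ((4:ℝ)/3)) n).symm
      _ ≤ (Real.sqrt 2 * ‖A‖) ^ ((4:ℝ)/3) :=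
          LW.main_finite ‖A‖ (norm_nonneg A) (fun i j => A ![c0e (i:ℕ), c0e (j:ℕ)])
            (fun g h hg hh => LW.hboundA A g h hg hh)
  have hsum : Summable F := summable_of_sum_le (fun p => hFnn p) hC
  have htsum : ∑' p, F p ≤ (Real.sqrt 2 * ‖A‖) ^ ((4:ℝ)/3) := hsum.tsum_le_of_sum_le hC
  have heq : ∑' i : ℕ, ∑' j : ℕ, ‖A ![c0e i, c0e j]‖ ^ ((4 : ℝ) / 3) = ∑' p, F p :=
    (hsum.tsum_prod' fun b => hsum.prod_factor b).symm
  rw [heq]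
  calc (∑' p, F p) ^ ((3:ℝ)/4)
      ≤ ((Real.sqrt 2 * ‖A‖) ^ ((4:ℝ)/3)) ^ ((3:ℝ)/4) :=
        Real.rpow_le_rpow (tsum_nonneg hFnn) htsum (by norm_num)
    _ = Real.sqrt 2 * ‖A‖ := by
        rw [← Real.rpow_mul hM2]
        norm_num


end
end

section
/- For every bounded bilinear form A : c₀ × c₀ → ℂ, the diagonal sum ∑_{i=1}^∞ |A(e_i, e_i)| is at most ‖A‖. -/
open scoped ENNReal

noncomputable section

namespace DiagAux

abbrev C0 := ZeroAtInftyContinuousMap ℕ ℂ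

/-- sign of a boolean -/
def ε (b : Bool) : ℂ := if b then 1 else -1

lemma ε_not (b : Bool) : ε (!b) = -ε b := by cases b <;> simp [ε]

lemma norm_ε (b : Bool) : ‖ε b‖ = 1 := by cases b <;> simp [ε]

lemma sign_sum {n : Type*} [Fintype n] [DecidableEq n] {i j : n} (hij : i ≠ j) :
    ∑ σ : n → Bool, ε (σ i) * ε (σ j) = 0 := by
  classical
  refine Finset.sum_ninvolution (fun σ => Function.update σ i (!σ i)) ?_ ?_
    (fun _ => Finset.mem_univ _) ?_
  · intro σ
    show ε (σ i) * ε (σ j) + ε (Function.update σ i (!σ i) i) * ε (Function.update σ i (!σ i) j) = 0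
    rw [Function.update_self, Function.update_of_ne hij.symm, ε_not]
    ring
  · intro σ _ h
    have := congrFun h i
    simp at this
  · intro σ
    funext k
    rcases eq_or_ne k i with rfl | hk
    · simp
    · simp [Function.update_of_ne hk]

lemma c0_sum_apply {ι : Type*} (s : Finset ι) (f : ι → C0) (x : ℕ) :
    (∑ i ∈ s, f i) x = ∑ i ∈ s, f i x := by
  classical
  induction s using Finset.induction with
  | empty => rfl
  | insert _ _ h ih => rw [Finset.sum_insert h, Finset.sum_insert h, ZeroAtInftyContinuousMap.coe_add,
      Pi.add_apply, ih]

lemma c0e_apply (i j : ℕ) : c0e i j = if j = i then 1 else 0 := rfl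

lemma norm_c0_sum_le {ι : Type*} [DecidableEq ι] (s : Finset ι) (g : ι → ℕ)
    (hg : Set.InjOn g s) (a : ι → ℂ) (ha : ∀ i, ‖a i‖ ≤ 1) :
    ‖∑ i ∈ s, a i • c0e (g i)‖ ≤ 1 := by
  rw [← ZeroAtInftyContinuousMap.norm_toBCF_eq_norm,
    BoundedContinuousFunction.norm_le zero_le_one]
  intro x
  show ‖(∑ i ∈ s, a i • c0e (g i)) x‖ ≤ 1
  rw [c0_sum_apply]
  have : ∀ i ∈ s, (a i • c0e (g i)) x = if x = g i then a i else 0 := by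
    intro i _
    rw [ZeroAtInftyContinuousMap.coe_smul, Pi.smul_apply, c0e_apply, smul_eq_mul]
    rcases eq_or_ne x (g i) with h | h
    · simp [h]
    · simp [h, Ne.symm h]
  rw [Finset.sum_congr rfl this]
  rcases em (∃ i ∈ s, g i = x) with ⟨i, hi, hgi⟩ | h
  · rw [Finset.sum_eq_single_of_mem i hi]
    · simpa [hgi.symm] using ha i
    · intro j hj hji
      have : x ≠ g j := fun hc => hji (hg hj hi (hc.symm.trans hgi.symm))
      simp [this]
  · push_neg at h
    rw [Finset.sum_eq_zero (fun i hi => by simp [(h i hi).symm, Ne.symm (h i hi)])]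
    simp


lemma update_zero (x y z : C0) : Function.update ![x, y] 0 z = ![z, y] := by
  funext k; fin_cases k <;> simp

lemma update_one (x y z : C0) : Function.update ![x, y] 1 z = ![x, z] := by
  funext k; fin_cases k <;> simp

variable (A : ContinuousMultilinearMap ℂ (fun _ : Fin 2 => C0) ℂ)

def B : C0 →ₗ[ℂ] C0 →ₗ[ℂ] ℂ :=
  LinearMap.mk₂ ℂ (fun x y => A ![x, y])
    (fun x x' y => by
      show A ![x + x', y] = A ![x, y] + A ![x', y]
      rw [← update_zero x, A.map_update_add, update_zero, update_zero])
    (fun c x y => by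
      show A ![c • x, y] = c • A ![x, y]
      rw [← update_zero x, A.map_update_smul, update_zero])
    (fun x y y' => by
      show A ![x, y + y'] = A ![x, y] + A ![x, y']
      rw [← update_one x y, A.map_update_add, update_one, update_one])
    (fun c x y => by
      show A ![x, c • y] = c • A ![x, y]
      rw [← update_one x y, A.map_update_smul, update_one])

lemma B_sum (S : Finset ℕ) (a b : ℕ → ℂ) :
    A ![∑ i ∈ S, a i • c0e i, ∑ j ∈ S, b j • c0e j] =
      ∑ i ∈ S, ∑ j ∈ S, a i * b j * A ![c0e i, c0e j] := by
  show B A (∑ i ∈ S, a i • c0e i) (∑ j ∈ S, b j • c0e j) = _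
  simp only [map_sum, LinearMap.sum_apply, map_smul, LinearMap.smul_apply, smul_eq_mul,
    Finset.mul_sum]
  rw [Finset.sum_comm]
  refine Finset.sum_congr rfl fun i _ => Finset.sum_congr rfl fun j _ => ?_
  have hB : ((B A) (c0e i)) (c0e j) = A ![c0e i, c0e j] := rfl
  rw [hB]
  ring

lemma key (S : Finset ℕ) : ∑ i ∈ S, ‖A ![c0e i, c0e i]‖ ≤ ‖A‖ := by
  classical
  set z : ℕ → ℂ := fun i => A ![c0e i, c0e i] with hz
  set d : ℕ → ℂ := fun i => if z i = 0 then 1 else (‖z i‖ : ℂ) / z i with hd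
  have hdz : ∀ i, d i * z i = (‖z i‖ : ℂ) := by
    intro i; by_cases h : z i = 0
    · simp [hd, h]
    · simp only [hd, if_neg h]; exact div_mul_cancel₀ _ h
  have hdnorm : ∀ i, ‖d i‖ ≤ 1 := by
    intro i; by_cases h : z i = 0
    · simp [hd, h]
    · simp only [hd, if_neg h, norm_div, Complex.norm_real, Real.norm_eq_abs,
        abs_norm]
      rw [div_self (by simpa using h)]
  set a : ({n // n ∈ S} → Bool) → ℕ → ℂ :=
    fun σ n => if h : n ∈ S then ε (σ ⟨n, h⟩) else 0 with ha
  have hanorm : ∀ σ n, ‖a σ n‖ ≤ 1 := by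
    intro σ n; by_cases h : n ∈ S
    · simp only [ha, dif_pos h]; cases σ ⟨n, h⟩ <;> simp [ε]
    · simp [ha, h]
  set x : ({n // n ∈ S} → Bool) → C0 := fun σ => ∑ i ∈ S, a σ i • c0e i with hx
  set y : ({n // n ∈ S} → Bool) → C0 := fun σ => ∑ i ∈ S, (a σ i * d i) • c0e i with hy
  have hxnorm : ∀ σ, ‖x σ‖ ≤ 1 := by
    intro σ
    simpa using norm_c0_sum_le S id (Function.injective_id.injOn) (a σ) (hanorm σ)
  have hynorm : ∀ σ, ‖y σ‖ ≤ 1 := by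
    intro σ
    refine le_trans (le_of_eq (by rfl)) ?_
    simpa using norm_c0_sum_le S id (Function.injective_id.injOn) (fun n => a σ n * d n)
      (fun n => by
        calc ‖a σ n * d n‖ = ‖a σ n‖ * ‖d n‖ := norm_mul _ _
        _ ≤ 1 * 1 := mul_le_mul (hanorm σ n) (hdnorm n) (norm_nonneg _) zero_le_one
        _ = 1 := one_mul 1)
  have hsig : ∀ i' j' : {n // n ∈ S}, ∑ σ : {n // n ∈ S} → Bool, ε (σ i') * ε (σ j') =
      if i' = j' then (2 ^ S.card : ℂ) else 0 := by
    intro i' j'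
    rcases eq_or_ne i' j' with rfl | h
    · rw [if_pos rfl]
      have : ∀ σ : {n // n ∈ S} → Bool, ε (σ i') * ε (σ i') = 1 := by
        intro σ; cases σ i' <;> simp [ε]
      rw [Finset.sum_congr rfl (fun σ _ => this σ), Finset.sum_const, nsmul_eq_mul, mul_one]
      simp [Fintype.card_fun, Fintype.card_coe]
    · rw [if_neg h, sign_sum h]
  have hcard : (Fintype.card ({n // n ∈ S} → Bool)) = 2 ^ S.card := by
    simp [Fintype.card_fun, Fintype.card_coe]
  -- the big identity
  have hT : ∑ σ : {n // n ∈ S} → Bool, A ![x σ, y σ] =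
      (2 ^ S.card : ℂ) * ∑ i ∈ S, (‖z i‖ : ℂ) := by
    have h1 : ∀ σ, A ![x σ, y σ] =
        ∑ i ∈ S, ∑ j ∈ S, a σ i * (a σ j * d j) * A ![c0e i, c0e j] :=
      fun σ => B_sum A S (a σ) (fun n => a σ n * d n)
    calc ∑ σ : {n // n ∈ S} → Bool, A ![x σ, y σ]
        = ∑ σ : {n // n ∈ S} → Bool, ∑ i ∈ S, ∑ j ∈ S,
            a σ i * (a σ j * d j) * A ![c0e i, c0e j] :=
          Finset.sum_congr rfl fun σ _ => h1 σ
      _ = ∑ i ∈ S, ∑ j ∈ S, ∑ σ : {n // n ∈ S} → Bool,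
            a σ i * (a σ j * d j) * A ![c0e i, c0e j] := by
          rw [Finset.sum_comm]
          exact Finset.sum_congr rfl fun i _ => Finset.sum_comm
      _ = ∑ i ∈ S, ∑ j ∈ S, (if i = j then (2 ^ S.card : ℂ) else 0)
            * (d j * A ![c0e i, c0e j]) := by
          refine Finset.sum_congr rfl fun i hi => Finset.sum_congr rfl fun j hj => ?_
          have hterm : ∀ σ : {n // n ∈ S} → Bool,
              a σ i * (a σ j * d j) * A ![c0e i, c0e j] =
                ε (σ ⟨i, hi⟩) * ε (σ ⟨j, hj⟩) * (d j * A ![c0e i, c0e j]) := by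
            intro σ; simp only [ha, dif_pos hi, dif_pos hj]; ring
          rw [Finset.sum_congr rfl (fun σ _ => hterm σ), ← Finset.sum_mul, hsig]
          simp only [Subtype.mk.injEq]
      _ = ∑ i ∈ S, (2 ^ S.card : ℂ) * (‖z i‖ : ℂ) := by
          refine Finset.sum_congr rfl fun i hi => ?_
          rw [Finset.sum_eq_single_of_mem i hi]
          · rw [if_pos rfl, hdz i]
          · intro j hj hji
            rw [if_neg (Ne.symm hji), zero_mul]
      _ = (2 ^ S.card : ℂ) * ∑ i ∈ S, (‖z i‖ : ℂ) := by rw [Finset.mul_sum]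
  have hbound : ∀ σ : {n // n ∈ S} → Bool, ‖A ![x σ, y σ]‖ ≤ ‖A‖ := by
    intro σ
    have h0 := A.le_opNorm ![x σ, y σ]
    rw [Fin.prod_univ_two] at h0
    simp only [Matrix.cons_val_zero, Matrix.cons_val_one, Matrix.head_cons] at h0
    calc ‖A ![x σ, y σ]‖ ≤ ‖A‖ * (‖x σ‖ * ‖y σ‖) := by
          exact h0
      _ ≤ ‖A‖ * (1 * 1) := by
          have := mul_le_mul (hxnorm σ) (hynorm σ) (norm_nonneg _) zero_le_one
          exact mul_le_mul_of_nonneg_left (by simpa using this) (norm_nonneg A)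
      _ = ‖A‖ := by ring
  have h2 : ‖∑ σ : {n // n ∈ S} → Bool, A ![x σ, y σ]‖ ≤ (2 ^ S.card : ℝ) * ‖A‖ := by
    refine (norm_sum_le _ _).trans ?_
    calc ∑ σ : {n // n ∈ S} → Bool, ‖A ![x σ, y σ]‖
        ≤ ∑ _σ : {n // n ∈ S} → Bool, ‖A‖ := Finset.sum_le_sum fun σ _ => hbound σ
      _ = (Fintype.card ({n // n ∈ S} → Bool) : ℝ) * ‖A‖ := by
          rw [Finset.sum_const, nsmul_eq_mul, Finset.card_univ]

      _ = (2 ^ S.card : ℝ) * ‖A‖ := by rw [hcard]; push_cast; ring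
  rw [hT] at h2
  have hnorm : ‖(2 ^ S.card : ℂ) * ∑ i ∈ S, (‖z i‖ : ℂ)‖ =
      (2 ^ S.card : ℝ) * ∑ i ∈ S, ‖z i‖ := by
    rw [norm_mul]
    have : (∑ i ∈ S, (‖z i‖ : ℂ)) = ((∑ i ∈ S, ‖z i‖ : ℝ) : ℂ) := by push_cast; ring
    rw [this, Complex.norm_real, Real.norm_eq_abs,
      abs_of_nonneg (Finset.sum_nonneg fun i _ => norm_nonneg _)]
    congr 1
    rw [show ((2 : ℂ) ^ S.card) = ((2 ^ S.card : ℝ) : ℂ) by push_cast; ring,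
      Complex.norm_real, Real.norm_eq_abs, abs_of_nonneg (by positivity)]
  rw [hnorm] at h2
  have hpos : (0 : ℝ) < 2 ^ S.card := by positivity
  exact le_of_mul_le_mul_left h2 hpos

end DiagAux

/-- For every bounded bilinear form `A : c₀ × c₀ → ℂ`, the diagonal sum
`∑_i |A(e_i, e_i)|` is at most `‖A‖`. -/
theorem diagonal_sum_le_norm
    (A : ContinuousMultilinearMap ℂ (fun _ : Fin 2 => ZeroAtInftyContinuousMap ℕ ℂ) ℂ) :
    Summable (fun i : ℕ => ‖A ![c0e i, c0e i]‖) ∧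
      ∑' i : ℕ, ‖A ![c0e i, c0e i]‖ ≤ ‖A‖ := by
  have hf : (0 : ℕ → ℝ) ≤ fun i => ‖A ![c0e i, c0e i]‖ := fun i => norm_nonneg _
  have hsum := summable_of_sum_le hf (DiagAux.key A)
  exact ⟨hsum, hsum.tsum_le_of_sum_le (DiagAux.key A)⟩

end
end
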